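/- Let x̄ ∈ (0,1), ḡ > 0, p > 0, K ∈ ℝ, and define V(x, g) = x̄/x + (1−x̄)·ln(x/(1−x)) + (g − ḡ·ln g)/p + K for x ∈ (0,1) and g > 0. If x, g : I → ℝ are differentiable on an interval I with x(t) ∈ (0,1) and g(t) > 0 for all t ∈ I, and satisfy ẋ = −x²(1−x)(g − ḡ) and ġ = p·g·(x − x̄) on I, then the function t ↦ V(x(t), g(t)) is constant on I (V is a first integral of this reduced system). -/

import Mathlib

/-- The Lyapunov candidate `V(x, g) = xbar/x + (1−xbar)·ln(x/(1−x)) + (g − gbar·ln g)/p + K`. -/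
noncomputable def V (xbar gbar p K x g : ℝ) : ℝ :=
  xbar / x + (1 - xbar) * Real.log (x / (1 - x)) + (g - gbar * Real.log g) / p + K

/-- `V` is a first integral of the reduced system
`ẋ = −x²(1−x)(g − gbar)`, `ġ = p·g·(x − xbar)`: it is constant along any solution that stays
in `(0,1) × (0,∞)` on an interval `I`. -/
theorem V_first_integral (xbar gbar p K : ℝ) (hxbar : xbar ∈ Set.Ioo (0 : ℝ) 1)
    (hgbar : 0 < gbar) (hp : 0 < p)
    (I : Set ℝ) (hI : I.OrdConnected) (x g : ℝ → ℝ)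
    (hmem : ∀ t ∈ I, x t ∈ Set.Ioo (0 : ℝ) 1 ∧ 0 < g t)
    (hx : ∀ t ∈ I, HasDerivAt x (-(x t) ^ 2 * (1 - x t) * (g t - gbar)) t)
    (hg : ∀ t ∈ I, HasDerivAt g (p * g t * (x t - xbar)) t) :
    ∀ t ∈ I, ∀ s ∈ I, V xbar gbar p K (x t) (g t) = V xbar gbar p K (x s) (g s) := by
  have hconv : Convex ℝ I := (convex_iff_ordConnected).2 hI
  have hF : ∀ t ∈ I, HasDerivAt (fun u => V xbar gbar p K (x u) (g u)) 0 t := by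
    intro t ht
    obtain ⟨⟨hx0, hx1⟩, hg0⟩ := hmem t ht
    have hx0' : x t ≠ 0 := ne_of_gt hx0
    have hx1' : (1 : ℝ) - x t ≠ 0 := by linarith
    have hg0' : g t ≠ 0 := ne_of_gt hg0
    have hxd := hx t ht
    have hgd := hg t ht
    -- term 1: xbar / x
    have h1 : HasDerivAt (fun u => xbar / x u)
        ((0 * x t - xbar * (-(x t) ^ 2 * (1 - x t) * (g t - gbar))) / (x t) ^ 2) t :=
      (hasDerivAt_const t xbar).div hxd hx0'
    -- quotient x/(1-x)
    have hq : HasDerivAt (fun u => x u / (1 - x u))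
        (((-(x t) ^ 2 * (1 - x t) * (g t - gbar)) * (1 - x t) -
          x t * (0 - (-(x t) ^ 2 * (1 - x t) * (g t - gbar)))) / (1 - x t) ^ 2) t :=
      hxd.div ((hasDerivAt_const t (1:ℝ)).sub hxd) hx1'
    have hqne : x t / (1 - x t) ≠ 0 := div_ne_zero hx0' hx1'
    have h2 : HasDerivAt (fun u => (1 - xbar) * Real.log (x u / (1 - x u)))
        ((1 - xbar) * ((((-(x t) ^ 2 * (1 - x t) * (g t - gbar)) * (1 - x t) -
          x t * (0 - (-(x t) ^ 2 * (1 - x t) * (g t - gbar)))) / (1 - x t) ^ 2) /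
          (x t / (1 - x t)))) t :=
      (hq.log hqne).const_mul _
    -- term 3
    have h3 : HasDerivAt (fun u => (g u - gbar * Real.log (g u)) / p)
        ((p * g t * (x t - xbar) - (0 * Real.log (g t) +
          gbar * (p * g t * (x t - xbar) / g t))) / p) t :=
      (hgd.sub ((hasDerivAt_const t gbar).mul (hgd.log hg0'))).div_const p
    have hsum := ((h1.add h2).add h3).add_const K
    simp only [V]
    refine hsum.congr_deriv ?_
    field_simp
    ring
  intro t ht s hs
  have hle := hconv.norm_image_sub_le_of_norm_hasDerivWithin_le
    (fun y hy => (hF y hy).hasDerivWithinAt)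
    (C := 0) (fun y hy => by simp) hs ht
  rw [zero_mul] at hle
  have h0 := le_antisymm hle (norm_nonneg _)
  rw [norm_eq_zero, sub_eq_zero] at h0
  exact h0
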